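/- Let $\gamma:I\to\mathbb{R}^d$ be $C^1$ and suppose $\det(\gamma'(t_1),\ldots,\gamma'(t_d))>0$ whenever $t_1<\cdots<t_d$ in $I$. Then the map $\Phi(t_1,\ldots,t_d)=\sum_{j=1}^d(-1)^j\gamma(t_j)$ is injective on the ordered simplex $\{(t_1,\ldots,t_d)\in I^d: t_1<\cdots<t_d\}$. -/

import Mathlib

open Finset

/-- alternating sum over Ico -/
lemma auxIco (a : ℕ) : ∀ b : ℕ, a ≤ b →
    ∑ j ∈ Finset.Ico a b, ((-1:ℝ))^(j+1)
      = (if Odd a then (1:ℝ) else 0) - (if Odd b then (1:ℝ) else 0) := by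
  intro b
  induction b with
  | zero => intro h; simp [Nat.le_zero.mp h]
  | succ b ih =>
    intro h
    rcases Nat.lt_or_ge a (b+1) with h' | h'
    · have hab : a ≤ b := Nat.lt_succ_iff.mp h'
      rw [Finset.sum_Ico_succ_top hab, ih hab]
      rcases Nat.even_or_odd b with he | ho
      · have h1 : ¬ Odd b := by simpa [Nat.not_odd_iff_even] using he
        have h2 : Odd (b+1) := Even.add_one he
        have : ((-1:ℝ))^(b+1) = -1 := by
          rw [pow_succ, he.neg_one_pow]; ring
        rw [this, if_neg h1, if_pos h2]; ring
      · have h2 : ¬ Odd (b+1) := by simp [Nat.odd_add_one, Nat.not_even_iff_odd.mpr ho]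
        have : ((-1:ℝ))^(b+1) = 1 := by
          rw [pow_succ, ho.neg_one_pow]; ring
        rw [this, if_pos ho, if_neg h2]; ring
    · have : a = b + 1 := le_antisymm h h'
      simp [this]

/-- number of points ≤ ξ -/
noncomputable def Ncnt {d : ℕ} (t : Fin d → ℝ) (ξ : ℝ) : ℕ :=
  (Finset.univ.filter (fun j => t j ≤ ξ)).card

lemma Ncnt_le {d : ℕ} (t : Fin d → ℝ) (ξ : ℝ) : Ncnt t ξ ≤ d := by
  classical
  simpa [Ncnt] using (Finset.card_filter_le Finset.univ (fun j : Fin d => t j ≤ ξ))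

lemma Ncnt_mono {d : ℕ} (t : Fin d → ℝ) {ξ ξ' : ℝ} (h : ξ ≤ ξ') : Ncnt t ξ ≤ Ncnt t ξ' := by
  classical
  apply Finset.card_le_card
  exact Finset.monotone_filter_right _ (fun j _ (hj : t j ≤ ξ) => le_trans hj h)

lemma Ncnt_iff {d : ℕ} {t : Fin d → ℝ} (ht : StrictMono t) (ξ : ℝ) (j : Fin d) :
    t j ≤ ξ ↔ (j:ℕ) < Ncnt t ξ := by
  classical
  by_cases hne : (Finset.univ.filter (fun i => t i ≤ ξ)).Nonempty
  · obtain ⟨J, hJmem, hJmax⟩ := Finset.exists_max_image _ id hne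
    have hJ : t J ≤ ξ := (Finset.mem_filter.mp hJmem).2
    have hset : Finset.univ.filter (fun i => t i ≤ ξ) = Finset.Iic J := by
      ext i
      simp only [Finset.mem_filter, Finset.mem_univ, true_and, Finset.mem_Iic]
      constructor
      · intro hi; exact hJmax i (by simp [hi])
      · intro hi; exact le_trans (ht.monotone hi) hJ
    have hcard : Ncnt t ξ = (J:ℕ) + 1 := by
      rw [Ncnt, hset, Fin.card_Iic]
    rw [hcard]
    constructor
    · intro hle
      have hjJ : j ≤ J := by simpa using hJmax j (by simp [hle])
      have : (j:ℕ) ≤ (J:ℕ) := hjJ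
      omega
    · intro hlt
      have hjJ : j ≤ J := by
        have h1 : (j:ℕ) ≤ (J:ℕ) := by omega
        exact h1
      exact le_trans (ht.monotone hjJ) hJ
  · have hset : Finset.univ.filter (fun i => t i ≤ ξ) = ∅ :=
      Finset.not_nonempty_iff_eq_empty.mp hne
    have hcard : Ncnt t ξ = 0 := by rw [Ncnt, hset]; simp
    rw [hcard]
    constructor
    · intro hle
      exact (hne ⟨j, by simp [hle]⟩).elim
    · intro h0
      omega

noncomputable def cpar (m : ℕ) : ℝ := if Odd m then 1 else 0

noncomputable def hfun {d : ℕ} (t t' : Fin d → ℝ) (ξ : ℝ) : ℝ :=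
  ∑ j : Fin d, ((-1:ℝ))^((j:ℕ)+1) *
    ((if ξ < t j then (1:ℝ) else 0) - (if ξ < t' j then (1:ℝ) else 0))

lemma half_sum {d : ℕ} {t : Fin d → ℝ} (ht : StrictMono t) (ξ : ℝ) :
    ∑ j : Fin d, ((-1:ℝ))^((j:ℕ)+1) * (if ξ < t j then (1:ℝ) else 0)
      = cpar (Ncnt t ξ) - cpar d := by
  classical
  have key : ∀ j : Fin d, (if ξ < t j then (1:ℝ) else 0)
      = (if Ncnt t ξ ≤ (j:ℕ) then (1:ℝ) else 0) := by
    intro j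
    have hiff := Ncnt_iff ht ξ j
    by_cases hj : ξ < t j
    · rw [if_pos hj, if_pos (Nat.le_of_not_lt (mt hiff.mpr (not_le.mpr hj)))]
    · rw [if_neg hj, if_neg (Nat.not_le.mpr (hiff.mp (not_lt.mp hj)))]
  calc ∑ j : Fin d, ((-1:ℝ))^((j:ℕ)+1) * (if ξ < t j then (1:ℝ) else 0)
      = ∑ j : Fin d, (if Ncnt t ξ ≤ (j:ℕ) then ((-1:ℝ))^((j:ℕ)+1) else 0) := by
        apply Finset.sum_congr rfl
        intro j _
        rw [key j]
        by_cases hj : Ncnt t ξ ≤ (j:ℕ) <;> simp [hj]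
    _ = ∑ j ∈ Finset.range d, (if Ncnt t ξ ≤ j then ((-1:ℝ))^(j+1) else 0) :=
        Fin.sum_univ_eq_sum_range (fun j => if Ncnt t ξ ≤ j then ((-1:ℝ))^(j+1) else 0) d
    _ = ∑ j ∈ (Finset.range d).filter (fun j => Ncnt t ξ ≤ j), ((-1:ℝ))^(j+1) :=
        (Finset.sum_filter _ _).symm
    _ = ∑ j ∈ Finset.Ico (Ncnt t ξ) d, ((-1:ℝ))^(j+1) := by
        congr 1
        ext j
        simp only [Finset.mem_filter, Finset.mem_range, Finset.mem_Ico]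
        tauto
    _ = cpar (Ncnt t ξ) - cpar d := auxIco _ _ (Ncnt_le t ξ)

lemma hfun_eq {d : ℕ} {t t' : Fin d → ℝ} (ht : StrictMono t) (ht' : StrictMono t') (ξ : ℝ) :
    hfun t t' ξ = cpar (Ncnt t ξ) - cpar (Ncnt t' ξ) := by
  have h1 := half_sum ht ξ
  have h2 := half_sum ht' ξ
  unfold hfun
  have : ∀ j : Fin d, ((-1:ℝ))^((j:ℕ)+1) *
      ((if ξ < t j then (1:ℝ) else 0) - (if ξ < t' j then (1:ℝ) else 0))
      = ((-1:ℝ))^((j:ℕ)+1) * (if ξ < t j then (1:ℝ) else 0)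
        - ((-1:ℝ))^((j:ℕ)+1) * (if ξ < t' j then (1:ℝ) else 0) := by
    intro j; ring
  rw [Finset.sum_congr rfl (fun j _ => this j), Finset.sum_sub_distrib, h1, h2]
  ring

lemma counting {d : ℕ} {t t' : Fin d → ℝ} (ht : StrictMono t) (ht' : StrictMono t')
    (x : Fin (d+1) → ℝ) (hx : StrictMono x)
    (hne : ∀ i, hfun t t' (x i) ≠ 0)
    (halt : ∀ i : Fin d, hfun t t' (x i.castSucc) * hfun t t' (x i.succ) < 0) :
    False := by
  classical
  -- parity facts
  have hval : ∀ ξ, hfun t t' ξ ≠ 0 →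
      ((Odd (Ncnt t ξ) ∧ ¬ Odd (Ncnt t' ξ) ∧ hfun t t' ξ = 1) ∨
       (¬ Odd (Ncnt t ξ) ∧ Odd (Ncnt t' ξ) ∧ hfun t t' ξ = -1)) := by
    intro ξ h0
    rw [hfun_eq ht ht' ξ] at h0 ⊢
    unfold cpar at h0 ⊢
    by_cases h1 : Odd (Ncnt t ξ) <;> by_cases h2 : Odd (Ncnt t' ξ) <;>
      simp [h1, h2] at h0 ⊢
  -- strict increase of both counters along the chain
  have hstep : ∀ i : Fin d, Ncnt t (x i.castSucc) < Ncnt t (x i.succ)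
      ∧ Ncnt t' (x i.castSucc) < Ncnt t' (x i.succ) := by
    intro i
    have hlt : x i.castSucc < x i.succ := hx (Fin.castSucc_lt_succ (i := i))
    have hm : Ncnt t (x i.castSucc) ≤ Ncnt t (x i.succ) := Ncnt_mono t hlt.le
    have hm' : Ncnt t' (x i.castSucc) ≤ Ncnt t' (x i.succ) := Ncnt_mono t' hlt.le
    rcases hval _ (hne i.castSucc) with ⟨o1, o2, e⟩ | ⟨o1, o2, e⟩ <;>
      rcases hval _ (hne i.succ) with ⟨p1, p2, f⟩ | ⟨p1, p2, f⟩
    · exfalso; have := halt i; rw [e, f] at this; norm_num at this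
    · exact ⟨lt_of_le_of_ne hm (fun heq => p1 (heq ▸ o1)),
        lt_of_le_of_ne hm' (fun heq => o2 (heq.symm ▸ p2))⟩
    · exact ⟨lt_of_le_of_ne hm (fun heq => o1 (heq.symm ▸ p1)),
        lt_of_le_of_ne hm' (fun heq => p2 (heq ▸ o2))⟩
    · exfalso; have := halt i; rw [e, f] at this; norm_num at this
  -- hence Ncnt at x 0 must be 0 for both
  have h1 : Ncnt t (x (Fin.last d)) ≤ d := Ncnt_le t _
  have h2 : Ncnt t' (x (Fin.last d)) ≤ d := Ncnt_le t' _
  have gen1 : ∀ i : Fin (d+1), Ncnt t (x 0) + (i:ℕ) ≤ Ncnt t (x i) := by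
    intro i
    induction i using Fin.induction with
    | zero => simp
    | succ i ih =>
      have hs := (hstep i).1
      have hc : ((i.castSucc : Fin (d+1)) : ℕ) = (i:ℕ) := Fin.coe_castSucc i
      rw [hc] at ih
      simp only [Fin.val_succ]
      omega
  have gen2 : ∀ i : Fin (d+1), Ncnt t' (x 0) + (i:ℕ) ≤ Ncnt t' (x i) := by
    intro i
    induction i using Fin.induction with
    | zero => simp
    | succ i ih =>
      have hs := (hstep i).2
      have hc : ((i.castSucc : Fin (d+1)) : ℕ) = (i:ℕ) := Fin.coe_castSucc i
      rw [hc] at ih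
      simp only [Fin.val_succ]
      omega
  have g1 := gen1 (Fin.last d)
  have g2 := gen2 (Fin.last d)
  simp only [Fin.val_last] at g1 g2
  have zero1 : Ncnt t (x 0) = 0 := by omega
  have zero2 : Ncnt t' (x 0) = 0 := by omega
  rcases hval _ (hne 0) with ⟨o1, _, _⟩ | ⟨_, o2, _⟩
  · rw [zero1] at o1; simp at o1
  · rw [zero2] at o2; simp at o2

section SignChanges
attribute [local instance] Classical.propDecidable

variable (b : ℕ → ℝ)

def SCprop (i : ℕ) : Prop :=
  b i ≠ 0 ∧ ∃ j, j < i ∧ b j ≠ 0 ∧ (∀ m, j < m → m < i → b m = 0) ∧ b j * b i < 0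

noncomputable def rho (k : ℕ) : ℕ :=
  ((Finset.range (k+1)).filter (fun i => SCprop b i)).card

lemma rho_mono {k k' : ℕ} (h : k ≤ k') : rho b k ≤ rho b k' := by
  apply Finset.card_le_card
  apply Finset.filter_subset_filter
  intro i hi
  simp only [Finset.mem_range] at hi ⊢
  omega

lemma rho_step (k : ℕ) : rho b (k+1) ≤ rho b k + 1 := by
  unfold rho
  rw [Finset.range_add_one, Finset.filter_insert]
  by_cases h : SCprop b (k+1)
  · rw [if_pos h]
    exact le_trans (Finset.card_insert_le _ _) (by omega)
  · rw [if_neg h]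
    omega

lemma rho_zero : rho b 0 = 0 := by
  unfold rho
  rw [Finset.card_eq_zero, Finset.filter_eq_empty_iff]
  intro i hi
  simp only [Finset.mem_range, Nat.lt_one_iff] at hi
  have : i = 0 := by omega
  subst this
  rintro ⟨-, j, hj, -⟩
  omega

lemma sc_exists : ∀ k' k, k < k' → b k * b k' < 0 → ∃ i, k < i ∧ i ≤ k' ∧ SCprop b i := by
  intro k'
  induction k' using Nat.strong_induction_on with
  | _ k' ih =>
    intro k hk hneg
    have hbk : b k ≠ 0 := fun h => by rw [h] at hneg; simp at hneg
    have hbk' : b k' ≠ 0 := fun h => by rw [h] at hneg; simp at hneg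
    by_cases hz : ∀ m, k < m → m < k' → b m = 0
    · exact ⟨k', hk, le_refl _, hbk', k, hk, hbk, hz, hneg⟩
    · push_neg at hz
      obtain ⟨m₀, hm₀1, hm₀2, hm₀3⟩ := hz
      -- take the largest such m
      set P : ℕ → Prop := fun m => k < m ∧ b m ≠ 0 with hP
      have hPm₀ : P m₀ := ⟨hm₀1, hm₀3⟩
      have hm₀le : m₀ ≤ k' - 1 := by omega
      set m := Nat.findGreatest P (k' - 1) with hm
      have hPm : P m := Nat.findGreatest_spec hm₀le hPm₀
      have hmle : m ≤ k' - 1 := Nat.findGreatest_le _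
      have hmax : ∀ j, m < j → j ≤ k' - 1 → ¬ P j := by
        intro j h1 h2
        exact Nat.findGreatest_is_greatest h1 h2
      have hmlt : m < k' := by omega
      have hkm : k < m := hPm.1
      have hbm : b m ≠ 0 := hPm.2
      rcases lt_trichotomy (b m * b k') 0 with hneg2 | hzz | hpos
      · -- SCprop at k' directly with j = m
        refine ⟨k', by omega, le_refl _, hbk', m, hmlt, hbm, ?_, hneg2⟩
        intro m' h1 h2
        by_contra hbm'
        exact hmax m' h1 (by omega) ⟨by omega, hbm'⟩
      · exact absurd hzz (by
          have := mul_ne_zero hbm hbk'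
          exact this)
      · -- recurse on (k, m)
        have hneg3 : b k * b m < 0 := by
          nlinarith [mul_neg_of_neg_of_pos hneg hpos, mul_self_pos.mpr hbk']
        obtain ⟨i, hi1, hi2, hi3⟩ := ih m hmlt k hkm hneg3
        exact ⟨i, hi1, by omega, hi3⟩

lemma rho_lt {k k' : ℕ} (h : k < k') (hneg : b k * b k' < 0) : rho b k < rho b k' := by
  obtain ⟨i, hi1, hi2, hi3⟩ := sc_exists b k' k h hneg
  have hsub : insert i ((Finset.range (k+1)).filter (fun i => SCprop b i))
      ⊆ (Finset.range (k'+1)).filter (fun i => SCprop b i) := by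
    intro j hj
    rcases Finset.mem_insert.mp hj with rfl | hj'
    · simp only [Finset.mem_filter, Finset.mem_range]
      exact ⟨by omega, hi3⟩
    · simp only [Finset.mem_filter, Finset.mem_range] at hj' ⊢
      exact ⟨by omega, hj'.2⟩
  have hnotmem : i ∉ (Finset.range (k+1)).filter (fun i => SCprop b i) := by
    simp only [Finset.mem_filter, Finset.mem_range]
    push_neg
    intro hc
    omega
  calc rho b k < rho b k + 1 := by omega
    _ = (insert i ((Finset.range (k+1)).filter (fun i => SCprop b i))).card := by
        rw [Finset.card_insert_of_notMem hnotmem]; rfl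
    _ ≤ rho b k' := Finset.card_le_card hsub

end SignChanges

lemma mem_of_mem_getLast' {α : Type*} {l : List α} {x : α} (h : x ∈ l.getLast?) : x ∈ l := by
  obtain ⟨hne, rfl⟩ := List.mem_getLast?_eq_getLast h
  exact List.getLast_mem hne

section Chain
attribute [local instance] Classical.propDecidable
variable (b : ℕ → ℝ)

lemma rho_chain : ∀ k, (∃ j, j ≤ k ∧ b j ≠ 0) → ∃ (L : List ℕ) (e : ℕ),
    (L ++ [e]).length = rho b k + 1 ∧ List.Chain' (· < ·) (L ++ [e]) ∧
    (∀ i ∈ L ++ [e], i ≤ k ∧ b i ≠ 0) ∧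
    List.Chain' (fun p q => b p * b q < 0) (L ++ [e]) ∧
    (∀ j, e < j → j ≤ k → b j = 0) := by
  intro k
  induction k with
  | zero =>
    rintro ⟨j, hj, hbj⟩
    have : j = 0 := by omega
    subst this
    exact ⟨[], 0, by simp [rho_zero], List.isChain_singleton _, by simp [hbj], List.isChain_singleton _, fun j h1 h2 => by omega⟩
  | succ k ih =>
    rintro ⟨j, hj, hbj⟩
    by_cases hk1 : b (k+1) = 0
    · -- last entry zero
      have hj' : j ≤ k := by
        by_contra hc
        have hjk : j = k+1 := by omega
        exact hbj (by rw [hjk]; exact hk1)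
      obtain ⟨L, e, h1, h2, h3, h4, h5⟩ := ih ⟨j, hj', hbj⟩
      have hrho : rho b (k+1) = rho b k := by
        have hnotSC : ¬ SCprop b (k+1) := fun h => h.1 hk1
        unfold rho
        rw [Finset.range_add_one, Finset.filter_insert, if_neg hnotSC]
      refine ⟨L, e, by rw [hrho]; exact h1, h2, fun i hi => ⟨le_trans (h3 i hi).1 (by omega), (h3 i hi).2⟩, h4, ?_⟩
      intro j' hj1 hj2
      rcases Nat.lt_or_ge j' (k+1) with h | h
      · exact h5 j' hj1 (by omega)
      · have : j' = k+1 := by omega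
        rw [this]; exact hk1
    · -- b (k+1) ≠ 0
      by_cases hprev : ∃ j', j' ≤ k ∧ b j' ≠ 0
      · obtain ⟨L, e, h1, h2, h3, h4, h5⟩ := ih hprev
        have he : e ≤ k ∧ b e ≠ 0 := h3 e (by simp)
        rcases lt_trichotomy (b e * b (k+1)) 0 with hneg | hzero | hpos
        · -- sign change: extend chain
          have hSC : SCprop b (k+1) := by
            refine ⟨hk1, e, by omega, he.2, ?_, hneg⟩
            intro m h1' h2'
            exact h5 m h1' (by omega)
          have hrho : rho b (k+1) = rho b k + 1 := by
            unfold rho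
            rw [Finset.range_add_one, Finset.filter_insert, if_pos hSC,
              Finset.card_insert_of_notMem (by simp)]
          refine ⟨L ++ [e], k+1, ?_, ?_, ?_, ?_, fun j' hj1 hj2 => by omega⟩
          · simp only [List.length_append, List.length_cons, List.length_nil] at h1 ⊢
            omega
          · unfold List.Chain'; rw [List.isChain_append]
            refine ⟨h2, by simp, ?_⟩
            intro x hx y hy
            rw [List.getLast?_concat] at hx
            simp at hx hy
            subst hx; subst hy
            omega
          · intro i hi
            rcases List.mem_append.mp hi with hi' | hi'
            · exact ⟨le_trans (h3 i hi').1 (by omega), (h3 i hi').2⟩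
            · simp at hi'
              subst hi'
              exact ⟨le_refl _, hk1⟩
          · unfold List.Chain'; rw [List.isChain_append]
            refine ⟨h4, by simp, ?_⟩
            intro x hx y hy
            rw [List.getLast?_concat] at hx
            simp at hx hy
            subst hx; subst hy
            exact hneg
        · exact absurd hzero (mul_ne_zero he.2 hk1)
        · -- same sign: replace last element
          have hrho : rho b (k+1) = rho b k := by
            have hnotSC : ¬ SCprop b (k+1) := by
              rintro ⟨-, j', hj'1, hj'2, hj'3, hj'4⟩
              -- j' must equal e
              have hj'e : j' = e := by
                rcases lt_trichotomy j' e with h | h | h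
                · exact absurd (hj'3 e h (by omega)) he.2
                · exact h
                · exact absurd (h5 j' h (by omega)) hj'2
              rw [hj'e] at hj'4
              linarith
            unfold rho
            rw [Finset.range_add_one, Finset.filter_insert, if_neg hnotSC]
          refine ⟨L, k+1, ?_, ?_, ?_, ?_, fun j' hj1 hj2 => by omega⟩
          · simp only [List.length_append, List.length_cons, List.length_nil] at h1 ⊢
            omega
          · unfold List.Chain' at h2 ⊢; rw [List.isChain_append] at h2 ⊢
            refine ⟨h2.1, by simp, ?_⟩
            intro x hx y hy
            simp only [List.head?_cons, Option.mem_def, Option.some.injEq] at hy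
            subst hy
            have hxL : x ∈ L := mem_of_mem_getLast' hx
            have : x ≤ k := (h3 x (List.mem_append_left _ hxL)).1
            omega
          · intro i hi
            rcases List.mem_append.mp hi with hi' | hi'
            · exact ⟨le_trans (h3 i (by simp [hi'])).1 (by omega), (h3 i (by simp [hi'])).2⟩
            · simp at hi'
              subst hi'
              exact ⟨le_refl _, hk1⟩
          · unfold List.Chain' at h4 ⊢; rw [List.isChain_append] at h4 ⊢
            refine ⟨h4.1, by simp, ?_⟩
            intro x hx y hy
            simp only [List.head?_cons, Option.mem_def, Option.some.injEq] at hy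
            subst hy
            have hxe : b x * b e < 0 := h4.2.2 x hx e (by simp)
            nlinarith [mul_self_pos.mpr he.2]
      · -- k+1 is the only nonzero entry
        push_neg at hprev
        have hrho : rho b (k+1) = 0 := by
          unfold rho
          rw [Finset.card_eq_zero, Finset.filter_eq_empty_iff]
          intro i hi
          rintro ⟨hbi, j', hj', hbj', -⟩
          simp only [Finset.mem_range] at hi
          rcases Nat.lt_or_ge i (k+1) with h | h
          · exact hbi (hprev i (by omega))
          · exact hbj' (hprev j' (by omega))
        exact ⟨[], k+1, by simp [hrho], List.isChain_singleton _, by simp [hk1], List.isChain_singleton _,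
          fun j' h1 h2 => by omega⟩

lemma exists_alt (d k : ℕ) (hd : d ≤ rho b k) (hnz : ∃ j, j ≤ k ∧ b j ≠ 0) :
    ∃ x : Fin (d+1) → ℕ, StrictMono x ∧ (∀ i, x i ≤ k ∧ b (x i) ≠ 0) ∧
      ∀ i : Fin d, b (x i.castSucc) * b (x i.succ) < 0 := by
  obtain ⟨L, e, h1, h2, h3, h4, -⟩ := rho_chain b k hnz
  set M := L ++ [e] with hM
  have hlen : d + 1 ≤ M.length := by rw [h1]; omega
  refine ⟨fun i => M.get ⟨(i:ℕ), by omega⟩, ?_, ?_, ?_⟩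
  · rw [Fin.strictMono_iff_lt_succ]
    intro i
    exact List.isChain_iff_getElem.mp h2 (i:ℕ) (by omega)
  · intro i
    exact h3 _ (List.get_mem M _)
  · intro i
    exact List.isChain_iff_getElem.mp h4 (i:ℕ) (by omega)

end Chain

lemma nat_ivt (f : ℕ → ℕ) (hstep : ∀ k, f (k+1) ≤ f k + 1) :
    ∀ a c v, a ≤ c → f a ≤ v → v ≤ f c → ∃ k, a ≤ k ∧ k ≤ c ∧ f k = v := by
  intro a c
  induction c with
  | zero =>
    intro v hac h1 h2
    have : a = 0 := by omega
    subst this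
    exact ⟨0, le_refl _, le_refl _, by omega⟩
  | succ c ih =>
    intro v hac h1 h2
    rcases Nat.lt_or_ge c a with hca | hca
    · have : a = c + 1 := by omega
      subst this
      exact ⟨c+1, le_refl _, le_refl _, by omega⟩
    · rcases le_or_gt v (f c) with h | h
      · obtain ⟨k, hk1, hk2, hk3⟩ := ih v hca h1 h
        exact ⟨k, hk1, by omega, hk3⟩
      · have := hstep c
        exact ⟨c+1, by omega, le_refl _, by omega⟩

section Analytic

lemma DP {d n : ℕ} {I : Set ℝ} (hI : I.OrdConnected) {γ : ℝ → Fin d → ℝ}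
    (hγ : ContDiffOn ℝ 1 γ I) (hU : UniqueDiffOn ℝ I)
    (hdet : ∀ t : Fin d → ℝ, (∀ i, t i ∈ I) → StrictMono t →
      0 < Matrix.det (Matrix.of fun i j => deriv γ (t i) j))
    (yy : ℕ → ℝ) (hyy : ∀ k l, k < l → l ≤ n → yy k < yy l) (hyyI : ∀ k, k ≤ n → yy k ∈ I)
    (σ : ℕ → Fin d) (hσ : ∀ k l, k ≤ l → l < n → σ k ≤ σ l)
    (a : ℕ → ℝ) (ha : ∀ k, k < n → 0 ≤ a k)
    (hwit : ∀ l : Fin d, ∃ k, k < n ∧ σ k = l ∧ 0 < a k) :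
    0 < Matrix.det (Matrix.of fun l => ∑ k ∈ (Finset.range n).filter (fun k => σ k = l),
        a k • (γ (yy (k+1)) - γ (yy k))) := by
  classical
  set G : ℝ → (Fin d → ℝ) := derivWithin γ I with hG
  have contG : ContinuousOn G I := hγ.continuousOn_derivWithin hU le_rfl
  have hIcc : ∀ k, k < n → Set.Icc (yy k) (yy (k+1)) ⊆ I := by
    intro k hk
    exact hI.out (hyyI k (by omega)) (hyyI (k+1) (by omega))
  have hIoo : ∀ k, k < n → Set.Ioo (yy k) (yy (k+1)) ⊆ interior I := by
    intro k hk
    rw [← interior_Icc]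
    exact interior_mono (hIcc k hk)
  have hDeriv : ∀ x ∈ interior I, HasDerivAt γ (G x) x := by
    intro x hx
    have hmem : I ∈ nhds x := mem_interior_iff_mem_nhds.mp hx
    have hdif : DifferentiableAt ℝ γ x :=
      ((hγ.differentiableOn one_ne_zero) x (interior_subset hx)).differentiableAt hmem
    have : G x = deriv γ x := derivWithin_of_mem_nhds hmem
    rw [this]
    exact hdif.hasDerivAt
  have hGeq : ∀ x ∈ interior I, G x = deriv γ x := fun x hx =>
    derivWithin_of_mem_nhds (mem_interior_iff_mem_nhds.mp hx)
  have hInt : ∀ k, k < n → IntervalIntegrable G MeasureTheory.volume (yy k) (yy (k+1)) := by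
    intro k hk
    apply ContinuousOn.intervalIntegrable
    rw [Set.uIcc_of_le (le_of_lt (hyy k (k+1) (by omega) (by omega)))]
    exact contG.mono (hIcc k hk)
  have hFTC : ∀ k, k < n →
      ∫ x in (yy k)..(yy (k+1)), G x = γ (yy (k+1)) - γ (yy k) := by
    intro k hk
    apply intervalIntegral.integral_eq_sub_of_hasDeriv_right_of_le
      (le_of_lt (hyy k (k+1) (by omega) (by omega)))
      (hγ.continuousOn.mono (hIcc k hk))
      (fun x hx => ((hDeriv x (hIoo k hk hx)).hasDerivWithinAt))
      (hInt k hk)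
  set u : Fin d → (Fin d → ℝ) := fun l => ∑ k ∈ (Finset.range n).filter (fun k => σ k = l),
        a k • (γ (yy (k+1)) - γ (yy k)) with hu
  have main : ∀ i : ℕ, i ≤ d → ∀ ξ : Fin d → ℝ,
      (∀ l : Fin d, i ≤ (l:ℕ) → ∃ k, k < n ∧ σ k = l ∧ ξ l ∈ Set.Ioo (yy k) (yy (k+1))) →
      0 < Matrix.det (Matrix.of fun l : Fin d => if (l:ℕ) < i then u l else G (ξ l)) := by
    intro i
    induction i with
    | zero =>
      intro _ ξ hξ
      have hmem : ∀ l : Fin d, ξ l ∈ interior I := by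
        intro l
        obtain ⟨k, hk, -, hmemk⟩ := hξ l (by omega)
        exact hIoo k hk hmemk
      have hmono : StrictMono ξ := by
        intro l l' hll
        obtain ⟨k, hk, hσk, hmemk⟩ := hξ l (by omega)
        obtain ⟨k', hk', hσk', hmemk'⟩ := hξ l' (by omega)
        have hkk : k < k' := by
          by_contra hc
          push_neg at hc
          have := hσ k' k hc hk
          rw [hσk, hσk'] at this
          exact absurd hll (not_lt.mpr this)
        have h1 : yy (k+1) ≤ yy k' := by
          rcases Nat.lt_or_ge (k+1) k' with h | h
          · exact le_of_lt (hyy (k+1) k' h (by omega))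
          · have hkk1 : k+1 = k' := by omega
            rw [hkk1]
        calc ξ l < yy (k+1) := hmemk.2
          _ ≤ yy k' := h1
          _ < ξ l' := hmemk'.1
      have heq : (Matrix.of fun l : Fin d => if (l:ℕ) < 0 then u l else G (ξ l))
          = Matrix.of (fun l j => deriv γ (ξ l) j) := by
        funext l j
        simp only [Matrix.of_apply, Nat.not_lt_zero, if_false]
        rw [hGeq (ξ l) (hmem l)]
      rw [heq]
      exact hdet ξ (fun l => interior_subset (hmem l)) hmono
    | succ i ihi =>
      intro hi ξ hξ
      have hid : i < d := by omega
      set li : Fin d := ⟨i, hid⟩ with hli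
      set C : (Fin d → ℝ) → Matrix (Fin d) (Fin d) ℝ :=
        fun z => Matrix.of (fun l => if (l:ℕ) < i then u l else if l = li then z else G (ξ l))
        with hC
      have hCB : (Matrix.of fun l : Fin d => if (l:ℕ) < i+1 then u l else G (ξ l)) = C (u li) := by
        funext l j
        simp only [hC, Matrix.of_apply]
        by_cases h1 : (l:ℕ) < i
        · rw [if_pos (by omega : (l:ℕ) < i+1), if_pos h1]
        · by_cases h2 : l = li
          · have hv : (l:ℕ) = i := by rw [h2]
            rw [if_pos (by omega : (l:ℕ) < i+1), if_neg h1, if_pos h2, h2]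
          · have hne : (l:ℕ) ≠ i := fun hc => h2 (Fin.ext hc)
            have h3 : ¬ (l:ℕ) < i+1 := by omega
            rw [if_neg h3, if_neg h1, if_neg h2]
      have hCup : ∀ z, C z = (C 0).updateRow li z := by
        intro z
        funext l j
        by_cases h2 : l = li
        · subst h2
          rw [Matrix.updateRow_self]
          have : (li:ℕ) = i := rfl
          simp [hC, this]
        · rw [Matrix.updateRow_ne h2]
          by_cases h1 : (l:ℕ) < i
          · simp [hC, h1]
          · simp [hC, h1, h2]
      set L : (Fin d → ℝ) →ₗ[ℝ] ℝ :=
        { toFun := fun z => ((C 0).updateRow li z).det,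
          map_add' := fun x y => Matrix.det_updateRow_add _ _ _ _,
          map_smul' := fun c x => Matrix.det_updateRow_smul _ _ _ _ } with hL
      have hLdet : ∀ z, Matrix.det (C z) = L z := by
        intro z
        rw [hCup z]
        rfl
      set Lc : (Fin d → ℝ) →L[ℝ] ℝ := LinearMap.toContinuousLinearMap L with hLc
      have hLcL : ∀ z, Lc z = L z := fun z => rfl
      -- integrand positivity
      have hpos : ∀ k, k < n → σ k = li → 0 < ∫ x in (yy k)..(yy (k+1)), Lc (G x) := by
        intro k hk hσk
        apply intervalIntegral.intervalIntegral_pos_of_pos_on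
        · apply ContinuousOn.intervalIntegrable
          rw [Set.uIcc_of_le (le_of_lt (hyy k (k+1) (by omega) (by omega)))]
          exact Lc.continuous.comp_continuousOn (contG.mono (hIcc k hk))
        · intro x hx
          have hξ' : ∀ l : Fin d, i ≤ (l:ℕ) →
              ∃ k', k' < n ∧ σ k' = l ∧ (Function.update ξ li x) l ∈ Set.Ioo (yy k') (yy (k'+1)) := by
            intro l hl
            by_cases h2 : l = li
            · subst h2
              refine ⟨k, hk, hσk, ?_⟩
              rw [Function.update_self]
              exact hx
            · have hl' : i+1 ≤ (l:ℕ) := by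
                rcases Nat.eq_or_lt_of_le hl with h | h
                · exact absurd (Fin.ext h.symm) h2
                · omega
              obtain ⟨k', hk', hσk', hmemk'⟩ := hξ l hl'
              refine ⟨k', hk', hσk', ?_⟩
              rw [Function.update_of_ne h2]
              exact hmemk'
          have := ihi (by omega) (Function.update ξ li x) hξ'
          have heq2 : (Matrix.of fun l : Fin d => if (l:ℕ) < i then u l else G ((Function.update ξ li x) l))
              = C (G x) := by
            funext l j
            simp only [hC, Matrix.of_apply]
            by_cases h1 : (l:ℕ) < i
            · rw [if_pos h1, if_pos h1]
            · by_cases h2 : l = li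
              · subst h2
                rw [if_neg h1, if_neg h1, if_pos rfl, Function.update_self]
              · rw [if_neg h1, if_neg h1, if_neg h2, Function.update_of_ne h2]
          rw [heq2, hLdet] at this
          exact this
        · exact hyy k (k+1) (by omega) (by omega)
      -- assemble
      rw [hCB, hLdet]
      have hexp : L (u li) = ∑ k ∈ (Finset.range n).filter (fun k => σ k = li),
          a k * (∫ x in (yy k)..(yy (k+1)), Lc (G x)) := by
        rw [hu]
        simp only [map_sum, map_smul, smul_eq_mul]
        apply Finset.sum_congr rfl
        intro k hk
        simp only [Finset.mem_filter, Finset.mem_range] at hk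
        congr 1
        rw [← hFTC k hk.1, ContinuousLinearMap.intervalIntegral_comp_comm Lc (hInt k hk.1)]
        exact (hLcL _).symm
      rw [hexp]
      apply Finset.sum_pos'
      · intro k hk
        simp only [Finset.mem_filter, Finset.mem_range] at hk
        exact mul_nonneg (ha k hk.1) (le_of_lt (hpos k hk.1 hk.2))
      · obtain ⟨k0, hk0, hσk0, ha0⟩ := hwit li
        refine ⟨k0, by simp [Finset.mem_filter, Finset.mem_range, hk0, hσk0], ?_⟩
        exact mul_pos ha0 (hpos k0 hk0 hσk0)
  -- conclude with i = d
  have hfin := main d le_rfl (fun _ => 0) (by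
    intro l hl
    exact absurd hl (by omega))
  have : (Matrix.of fun l : Fin d => if (l:ℕ) < d then u l else G 0)
      = Matrix.of (fun l : Fin d => u l) := by
    funext l j
    simp only [Matrix.of_apply]
    rw [if_pos l.isLt]
  rw [this] at hfin
  exact hfin

end Analytic

lemma cpar_succ_ne (j : ℕ) : cpar (j+1) ≠ cpar j := by
  rcases Nat.even_or_odd j with he | ho
  · have h1 : ¬ Odd j := by simpa [Nat.not_odd_iff_even] using he
    have h2 : Odd (j+1) := Even.add_one he
    simp [cpar, h1, h2]
  · have h2 : ¬ Odd (j+1) := by simp [Nat.odd_add_one, Nat.not_even_iff_odd.mpr ho]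
    simp [cpar, ho, h2]

lemma ncnt_at_min {d : ℕ} {t t' : Fin d → ℝ} (ht : StrictMono t) (ht' : StrictMono t')
    (j0 : ℕ) (hj0 : j0 < d) (hlt : t ⟨j0, hj0⟩ < t' ⟨j0, hj0⟩)
    (hmin : ∀ i (hi : i < j0), t ⟨i, lt_trans hi hj0⟩ = t' ⟨i, lt_trans hi hj0⟩) :
    Ncnt t (t ⟨j0, hj0⟩) = j0 + 1 ∧ Ncnt t' (t ⟨j0, hj0⟩) = j0 := by
  set ξ := t ⟨j0, hj0⟩ with hξ
  constructor
  · have hge : j0 < Ncnt t ξ := (Ncnt_iff ht ξ ⟨j0, hj0⟩).mp (le_refl _)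
    have hle : Ncnt t ξ ≤ j0 + 1 := by
      rcases Nat.lt_or_ge (j0+1) d with h | h
      · have : ¬ t ⟨j0+1, h⟩ ≤ ξ := by
          push_neg
          exact ht (by exact Fin.mk_lt_mk.mpr (by omega))
        have := mt (Ncnt_iff ht ξ ⟨j0+1, h⟩).mpr this
        simpa using this
      · have := Ncnt_le t ξ
        omega
    omega
  · have hle : Ncnt t' ξ ≤ j0 := by
      have : ¬ t' ⟨j0, hj0⟩ ≤ ξ := not_le.mpr hlt
      have := mt (Ncnt_iff ht' ξ ⟨j0, hj0⟩).mpr this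
      simpa using this
    rcases Nat.eq_zero_or_pos j0 with h0 | h0
    · omega
    · have hi : j0 - 1 < j0 := by omega
      have heqi : t ⟨j0-1, lt_trans hi hj0⟩ = t' ⟨j0-1, lt_trans hi hj0⟩ := hmin _ hi
      have hlt2 : t' ⟨j0-1, lt_trans hi hj0⟩ ≤ ξ := by
        rw [← heqi]
        exact le_of_lt (ht (Fin.mk_lt_mk.mpr hi))
      have := (Ncnt_iff ht' ξ ⟨j0-1, lt_trans hi hj0⟩).mp hlt2
      simp only at this
      omega

set_option maxHeartbeats 2000000 in
theorem stmt19 (d : ℕ) (I : Set ℝ) (hI : I.OrdConnected) (γ : ℝ → (Fin d → ℝ))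
    (hγ : ContDiffOn ℝ 1 γ I)
    (hdet : ∀ t : Fin d → ℝ, (∀ i, t i ∈ I) → StrictMono t →
      0 < Matrix.det (Matrix.of fun i j => deriv γ (t i) j)) :
    Set.InjOn (fun t : Fin d → ℝ => ∑ j : Fin d, ((-1 : ℝ) ^ ((j : ℕ) + 1)) • γ (t j))
      {t : Fin d → ℝ | (∀ i, t i ∈ I) ∧ StrictMono t} := by
  classical
  rcases Nat.eq_zero_or_pos d with hd0 | hd
  · subst hd0
    intro t _ t' _ _
    funext i
    exact absurd i.isLt (Nat.not_lt_zero _)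
  intro t ht t' ht' heq
  simp only [Set.mem_setOf_eq] at ht ht'
  simp only at heq
  by_contra htne
  -- basic indices
  set i0 : Fin d := ⟨0, hd⟩ with hi0
  set ilast : Fin d := ⟨d-1, by omega⟩ with hilast
  set a : ℝ := min (t i0) (t' i0) with ha
  set T : ℝ := max (t ilast) (t' ilast) with hT
  have haI : a ∈ I := by
    rcases min_choice (t i0) (t' i0) with h | h <;> rw [ha, h]
    · exact ht.1 i0
    · exact ht'.1 i0
  have hTI : T ∈ I := by
    rcases max_choice (t ilast) (t' ilast) with h | h <;> rw [hT, h]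
    · exact ht.1 ilast
    · exact ht'.1 ilast
  have haT : a < T := by
    rcases Nat.lt_or_ge 1 d with h2 | h2
    · have h01 : i0 < ilast := Fin.mk_lt_mk.mpr (by omega)
      calc a ≤ t i0 := min_le_left _ _
        _ < t ilast := ht.2 h01
        _ ≤ T := le_max_left _ _
    · -- d = 1
      have hd1 : d = 1 := by omega
      have hii : i0 = ilast := Fin.ext (by omega)
      have hne : t i0 ≠ t' i0 := by
        intro hc
        apply htne
        funext j
        have hj : j = i0 := Fin.ext (by omega)
        rw [hj]; exact hc
      rw [ha, hT, ← hii]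
      exact min_lt_max.mpr hne
  have hIccI : Set.Icc a T ⊆ I := hI.out haI hTI
  have hUD : UniqueDiffOn ℝ I := by
    apply uniqueDiffOn_convex hI.convex
    refine ⟨(a+T)/2, ?_⟩
    have : Set.Ioo a T ⊆ interior I := by
      rw [← interior_Icc]
      exact interior_mono hIccI
    exact this ⟨by linarith, by linarith⟩
  -- extra points
  set ext : Fin (d+1) → ℝ := fun i => a + (i:ℕ) * ((T - a) / d) with hext
  have hc' : 0 < (T - a) / d := by
    apply div_pos (by linarith)
    exact_mod_cast hd
  have hextmono : StrictMono ext := by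
    intro i j hij
    rw [hext]
    simp only
    have : ((i:ℕ):ℝ) < ((j:ℕ):ℝ) := by exact_mod_cast hij
    nlinarith
  have hextIcc : ∀ i : Fin (d+1), ext i ∈ Set.Icc a T := by
    intro i
    constructor
    · rw [hext]
      simp only
      have : (0:ℝ) ≤ ((i:ℕ):ℝ) := by positivity
      nlinarith
    · rw [hext]
      simp only
      have h1 : ((i:ℕ):ℝ) ≤ (d:ℝ) := by
        have := i.isLt
        exact_mod_cast (by omega : (i:ℕ) ≤ d)
      have h2 : (d:ℝ) * ((T - a) / d) = T - a := by
        field_simp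
      nlinarith
  have hextlast : ext ⟨d, by omega⟩ = T := by
    rw [hext]
    simp only
    have h2 : (d:ℝ) * ((T - a) / d) = T - a := by field_simp
    rw [h2]; ring
  -- the partition point set
  set F : Finset ℝ := ((Finset.univ.image t) ∪ (Finset.univ.image t')) ∪ (Finset.univ.image ext)
    with hF
  have htF : ∀ j, t j ∈ F := fun j =>
    Finset.mem_union_left _ (Finset.mem_union_left _ (Finset.mem_image_of_mem t (Finset.mem_univ j)))
  have ht'F : ∀ j, t' j ∈ F := fun j =>
    Finset.mem_union_left _ (Finset.mem_union_right _ (Finset.mem_image_of_mem t' (Finset.mem_univ j)))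
  have hextF : ∀ i, ext i ∈ F := fun i =>
    Finset.mem_union_right _ (Finset.mem_image_of_mem ext (Finset.mem_univ i))
  have hTF : T ∈ F := by
    rw [← hextlast]; exact hextF _
  have hFI : ∀ x ∈ F, x ∈ I := by
    intro x hx
    rw [hF] at hx
    rcases Finset.mem_union.mp hx with h | h
    · rcases Finset.mem_union.mp h with h' | h'
      · obtain ⟨j, -, rfl⟩ := Finset.mem_image.mp h'
        exact ht.1 j
      · obtain ⟨j, -, rfl⟩ := Finset.mem_image.mp h'
        exact ht'.1 j
    · obtain ⟨i, -, rfl⟩ := Finset.mem_image.mp h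
      exact hIccI (hextIcc i)
  set m : ℕ := F.card with hm
  have hdm : d + 1 ≤ m := by
    calc d + 1 = (Finset.univ.image ext).card := by
          rw [Finset.card_image_of_injective _ hextmono.injective, Finset.card_univ, Fintype.card_fin]
      _ ≤ m := Finset.card_le_card (fun x hx => Finset.mem_union_right _ hx)
  set n : ℕ := m - 1 with hn
  have hdn : d ≤ n := by omega
  have hm1 : 1 ≤ m := by omega
  set oi := F.orderIsoOfFin rfl with hoi
  set yy : ℕ → ℝ := fun k => ((oi ⟨min k (m-1), by omega⟩ : F) : ℝ) with hyy
  have hyy_lt : ∀ k l, k < l → l ≤ n → yy k < yy l := by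
    intro k l hkl hln
    rw [hyy]
    simp only
    have h1 : min k (m-1) = k := min_eq_left (by omega)
    have h2 : min l (m-1) = l := min_eq_left (by omega)
    have : (⟨min k (m-1), by omega⟩ : Fin m) < ⟨min l (m-1), by omega⟩ := by
      rw [Fin.mk_lt_mk, h1, h2]; exact hkl
    exact_mod_cast oi.lt_iff_lt.mpr this
  have hyy_le : ∀ k l, k ≤ l → l ≤ n → yy k ≤ yy l := by
    intro k l hkl hln
    rcases Nat.eq_or_lt_of_le hkl with h | h
    · rw [h]
    · exact le_of_lt (hyy_lt k l h hln)
  have hyyI : ∀ k, k ≤ n → yy k ∈ I := by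
    intro k hk
    exact hFI _ (oi ⟨min k (m-1), by omega⟩).2
  have hyymem : ∀ x, x ∈ F → ∃ k, k ≤ n ∧ yy k = x := by
    intro x hx
    refine ⟨(oi.symm ⟨x, hx⟩ : Fin m), by omega, ?_⟩
    rw [hyy]
    simp only
    have hlt : ((oi.symm ⟨x, hx⟩ : Fin m) : ℕ) ≤ m - 1 := by
      have := (oi.symm ⟨x, hx⟩).isLt
      omega
    have : (⟨min ((oi.symm ⟨x, hx⟩ : Fin m) : ℕ) (m-1), by omega⟩ : Fin m) = oi.symm ⟨x, hx⟩ := by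
      apply Fin.ext
      simp only
      rw [min_eq_left hlt]
    rw [this, OrderIso.apply_symm_apply]
  -- piece increments
  set w : ℕ → (Fin d → ℝ) := fun k => γ (yy (k+1)) - γ (yy k) with hw
  -- telescoping
  have htel : ∀ x, x ∈ F →
      γ x - γ (yy 0) = ∑ k ∈ Finset.range n, (if yy k < x then (1:ℝ) else 0) • w k := by
    intro x hx
    obtain ⟨K, hK, hyK⟩ := hyymem x hx
    subst hyK
    have step1 : ∀ k, (if yy k < yy K then (1:ℝ) else 0) • w k
        = (if yy k < yy K then w k else 0) := by
      intro k
      by_cases h : yy k < yy K <;> simp [h]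
    rw [Finset.sum_congr rfl (fun k _ => step1 k), ← Finset.sum_filter]
    have hfilter : (Finset.range n).filter (fun k => yy k < yy K) = Finset.range K := by
      ext k
      simp only [Finset.mem_filter, Finset.mem_range]
      constructor
      · rintro ⟨h1, h2⟩
        by_contra hc
        push_neg at hc
        exact absurd h2 (not_lt.mpr (hyy_le K k hc (by omega)))
      · intro h
        exact ⟨by omega, hyy_lt k K h hK⟩
    rw [hfilter, hw]
    exact (Finset.sum_range_sub (fun k => γ (yy k)) K).symm
  -- the master sum identity
  set b : ℕ → ℝ := fun k => hfun t t' (yy k) with hb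
  have hsplit : ∀ j : Fin d, γ (t j) - γ (t' j)
      = ∑ k ∈ Finset.range n,
        ((if yy k < t j then (1:ℝ) else 0) - (if yy k < t' j then (1:ℝ) else 0)) • w k := by
    intro j
    have h1 := htel (t j) (htF j)
    have h2 := htel (t' j) (ht'F j)
    have h3 : γ (t j) - γ (t' j) = (γ (t j) - γ (yy 0)) - (γ (t' j) - γ (yy 0)) := by abel
    rw [h3, h1, h2, ← Finset.sum_sub_distrib]
    exact Finset.sum_congr rfl (fun k _ => (sub_smul _ _ _).symm)
  have h0 : ∑ j : Fin d, ((-1:ℝ)^((j:ℕ)+1)) • (γ (t j) - γ (t' j)) = 0 := by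
    have : ∑ j : Fin d, ((-1:ℝ)^((j:ℕ)+1)) • (γ (t j) - γ (t' j))
        = (∑ j : Fin d, ((-1:ℝ)^((j:ℕ)+1)) • γ (t j))
          - (∑ j : Fin d, ((-1:ℝ)^((j:ℕ)+1)) • γ (t' j)) := by
      rw [← Finset.sum_sub_distrib]
      exact Finset.sum_congr rfl (fun j _ => smul_sub _ _ _)
    rw [this, heq, sub_self]
  have hmain : ∑ k ∈ Finset.range n, b k • w k = 0 := by
    calc ∑ k ∈ Finset.range n, b k • w k
        = ∑ k ∈ Finset.range n, ∑ j : Fin d,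
            (((-1:ℝ)^((j:ℕ)+1)) * ((if yy k < t j then (1:ℝ) else 0)
              - (if yy k < t' j then (1:ℝ) else 0))) • w k := by
          apply Finset.sum_congr rfl
          intro k _
          rw [hb]
          show hfun t t' (yy k) • w k = _
          rw [hfun]
          rw [Finset.sum_smul]
      _ = ∑ j : Fin d, ∑ k ∈ Finset.range n,
            (((-1:ℝ)^((j:ℕ)+1)) * ((if yy k < t j then (1:ℝ) else 0)
              - (if yy k < t' j then (1:ℝ) else 0))) • w k := Finset.sum_comm
      _ = ∑ j : Fin d, ((-1:ℝ)^((j:ℕ)+1)) • (γ (t j) - γ (t' j)) := by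
          apply Finset.sum_congr rfl
          intro j _
          rw [hsplit j, Finset.smul_sum]
          apply Finset.sum_congr rfl
          intro k _
          rw [smul_smul]
      _ = 0 := h0
  -- nontriviality
  have hbne : ∃ k0, k0 < n ∧ b k0 ≠ 0 := by
    have hexj : ∃ j : ℕ, ∃ hj : j < d, t ⟨j, hj⟩ ≠ t' ⟨j, hj⟩ := by
      by_contra hc
      push_neg at hc
      apply htne
      funext j
      have := hc (j:ℕ) j.isLt
      simpa using this
    set j0 : ℕ := Nat.find hexj with hj0def
    obtain ⟨hj0d, hne0⟩ := Nat.find_spec hexj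
    have hminj : ∀ i (hi : i < j0), t ⟨i, lt_trans hi hj0d⟩ = t' ⟨i, lt_trans hi hj0d⟩ := by
      intro i hi
      have := Nat.find_min hexj hi
      push_neg at this
      exact this (lt_trans hi hj0d)
    have hjlast : (⟨j0, hj0d⟩ : Fin d) ≤ ilast := by
      rw [hilast]
      exact Fin.mk_le_mk.mpr (by omega)
    rcases lt_or_gt_of_ne hne0 with hlt | hgt
    · -- t below
      obtain ⟨hN, hN'⟩ := ncnt_at_min ht.2 ht'.2 j0 hj0d hlt hminj
      set ξ : ℝ := t ⟨j0, hj0d⟩ with hξ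
      have hξF : ξ ∈ F := htF _
      have hξT : ξ < T := by
        calc ξ < t' ⟨j0, hj0d⟩ := hlt
          _ ≤ t' ilast := ht'.2.monotone hjlast
          _ ≤ T := le_max_right _ _
      obtain ⟨k0, hk0, hyk0⟩ := hyymem ξ hξF
      obtain ⟨kT, hkT, hykT⟩ := hyymem T hTF
      have hk0n : k0 < n := by
        by_contra hc
        push_neg at hc
        have hk0n' : k0 = n := by omega
        have : yy kT ≤ yy k0 := hyy_le kT k0 (by omega) (by omega)
        rw [hyk0, hykT] at this
        linarith
      refine ⟨k0, hk0n, ?_⟩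
      rw [hb]
      show hfun t t' (yy k0) ≠ 0
      rw [hyk0, hfun_eq ht.2 ht'.2, hN, hN']
      exact sub_ne_zero.mpr (cpar_succ_ne j0)
    · -- t' below
      obtain ⟨hN', hN⟩ := ncnt_at_min ht'.2 ht.2 j0 hj0d hgt (fun i hi => (hminj i hi).symm)
      set ξ : ℝ := t' ⟨j0, hj0d⟩ with hξ
      have hξF : ξ ∈ F := ht'F _
      have hξT : ξ < T := by
        calc ξ < t ⟨j0, hj0d⟩ := hgt
          _ ≤ t ilast := ht.2.monotone hjlast
          _ ≤ T := le_max_left _ _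
      obtain ⟨k0, hk0, hyk0⟩ := hyymem ξ hξF
      obtain ⟨kT, hkT, hykT⟩ := hyymem T hTF
      have hk0n : k0 < n := by
        by_contra hc
        push_neg at hc
        have : yy kT ≤ yy k0 := hyy_le kT k0 (by omega) (by omega)
        rw [hyk0, hykT] at this
        linarith
      refine ⟨k0, hk0n, ?_⟩
      rw [hb]
      show hfun t t' (yy k0) ≠ 0
      rw [hyk0, hfun_eq ht.2 ht'.2, hN, hN']
      exact sub_ne_zero.mpr (fun hc => (cpar_succ_ne j0) hc.symm)
  obtain ⟨k0, hk0n, hbk0⟩ := hbne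
  have hbnz : ∃ j, j ≤ n-1 ∧ b j ≠ 0 := ⟨k0, by omega, hbk0⟩
  -- rho bound
  have hrho_lt : rho b (n-1) < d := by
    by_contra hc
    push_neg at hc
    obtain ⟨x, hxmono, hxmem, hxalt⟩ := exists_alt b d (n-1) hc hbnz
    apply counting ht.2 ht'.2 (fun i => yy (x i))
    · intro i j hij
      exact hyy_lt (x i) (x j) (hxmono hij) (by have := (hxmem j).1; omega)
    · intro i
      exact (hxmem i).2
    · intro i
      exact hxalt i
  -- the monotone surjection onto Fin d
  set σn : ℕ → ℕ := fun k => max (rho b k) (k + d - n) with hσn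
  have hσn_le : ∀ k, k ≤ n-1 → σn k ≤ d-1 := by
    intro k hk
    have h1 : rho b k ≤ rho b (n-1) := rho_mono b hk
    rw [hσn]
    simp only
    omega
  set σF : ℕ → Fin d := fun k => ⟨min (σn k) (d-1), by omega⟩ with hσF
  have hσFval : ∀ k, k ≤ n-1 → (σF k : ℕ) = σn k := by
    intro k hk
    rw [hσF]
    simp only
    rw [min_eq_left (hσn_le k hk)]
  have hσFmono : ∀ k l, k ≤ l → l < n → σF k ≤ σF l := by
    intro k l hkl hln
    have h1 := hσFval k (by omega)
    have h2 := hσFval l (by omega)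
    rw [Fin.le_def, h1, h2, hσn]
    simp only
    have := rho_mono b hkl
    omega
  have hσstep : ∀ k, σn (k+1) ≤ σn k + 1 := by
    intro k
    have := rho_step b k
    rw [hσn]
    simp only
    omega
  have hσ0 : σn 0 = 0 := by
    rw [hσn]
    simp only
    rw [rho_zero]
    omega
  have hσtop : σn (n-1) = d-1 := by
    rw [hσn]
    simp only
    have := hrho_lt
    omega
  have hsurj : ∀ l : Fin d, ∃ k, k < n ∧ σF k = l := by
    intro l
    obtain ⟨k, hk1, hk2, hk3⟩ := nat_ivt σn hσstep 0 (n-1) (l:ℕ) (by omega)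
      (by rw [hσ0]; omega) (by rw [hσtop]; omega)
    refine ⟨k, by omega, ?_⟩
    apply Fin.ext
    rw [hσFval k hk2, hk3]
  -- fiber sign coherence
  have hfib : ∀ k k', k < n → k' < n → σF k = σF k' → b k ≠ 0 → b k' ≠ 0 → 0 < b k * b k' := by
    have key : ∀ k k', k < k' → k' < n → σF k = σF k' → b k ≠ 0 → b k' ≠ 0 → 0 < b k * b k' := by
      intro k k' hkk hk'n hσeq hbk hbk'
      rcases lt_trichotomy (b k * b k') 0 with hneg | hzero | hpos
      · exfalso
        have hrr : rho b k < rho b k' := rho_lt b hkk hneg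
        have h1 := hσFval k (by omega)
        have h2 := hσFval k' (by omega)
        have : σn k = σn k' := by
          rw [← h1, ← h2, hσeq]
        rw [hσn] at this
        simp only at this
        omega
      · exact absurd hzero (mul_ne_zero hbk hbk')
      · exact hpos
    intro k k' hkn hk'n hσeq hbk hbk'
    rcases lt_trichotomy k k' with h | h | h
    · exact key k k' h hk'n hσeq hbk hbk'
    · subst h
      exact mul_self_pos.mpr hbk
    · have := key k' k h hkn hσeq.symm hbk' hbk
      linarith [this]
  -- coefficients
  set P : Fin d → Prop := fun l => ∃ k, k < n ∧ σF k = l ∧ b k ≠ 0 with hP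
  set cc : Fin d → ℝ := fun l => if h : P l then b (Classical.choose h) else 0 with hcc
  have hccP : ∀ l (h : P l), cc l = b (Classical.choose h)
      ∧ Classical.choose h < n ∧ σF (Classical.choose h) = l ∧ b (Classical.choose h) ≠ 0 := by
    intro l h
    obtain ⟨h1, h2, h3⟩ := Classical.choose_spec h
    exact ⟨by rw [hcc]; simp only; rw [dif_pos h], h1, h2, h3⟩
  have hccne : ∀ l, P l → cc l ≠ 0 := by
    intro l h
    obtain ⟨he, -, -, hne⟩ := hccP l h
    rw [he]
    exact hne
  have hcc0 : ∀ l, ¬ P l → cc l = 0 := by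
    intro l h
    rw [hcc]
    simp only
    rw [dif_neg h]
  set aa : ℕ → ℝ := fun k => if cc (σF k) = 0 then 1 else b k / cc (σF k) with haa
  have key1 : ∀ k, k < n → cc (σF k) * aa k = b k := by
    intro k hk
    by_cases hc : cc (σF k) = 0
    · have hnP : ¬ P (σF k) := fun h => hccne _ h hc
      have hbk : b k = 0 := by
        by_contra hbk
        exact hnP ⟨k, hk, rfl, hbk⟩
      rw [hc, hbk, zero_mul]
    · rw [haa]
      simp only
      rw [if_neg hc, mul_comm, div_mul_cancel₀ _ hc]
  have key2 : ∀ k, k < n → 0 ≤ aa k := by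
    intro k hk
    by_cases hc : cc (σF k) = 0
    · rw [haa]; simp only; rw [if_pos hc]; norm_num
    · rw [haa]; simp only; rw [if_neg hc]
      have hPk : P (σF k) := by
        by_contra hnP
        exact hc (hcc0 _ hnP)
      obtain ⟨he, hlt, hσe, hbne'⟩ := hccP _ hPk
      by_cases hbk : b k = 0
      · rw [hbk, zero_div]
      · have hprod : 0 < b k * b (Classical.choose hPk) :=
          hfib k (Classical.choose hPk) hk hlt (by rw [hσe]) hbk hbne'
        rw [he]
        rcases mul_pos_iff.mp hprod with ⟨h1, h2⟩ | ⟨h1, h2⟩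
        · exact le_of_lt (div_pos h1 h2)
        · exact le_of_lt (div_pos_of_neg_of_neg h1 h2)
  have key3 : ∀ l : Fin d, ∃ k, k < n ∧ σF k = l ∧ 0 < aa k := by
    intro l
    by_cases hPl : P l
    · obtain ⟨he, hlt, hσe, hbne'⟩ := hccP l hPl
      refine ⟨Classical.choose hPl, hlt, hσe, ?_⟩
      rw [haa]
      simp only
      rw [hσe, if_neg (hccne l hPl), he]
      rw [div_self hbne']
      norm_num
    · obtain ⟨k, hk, hσk⟩ := hsurj l
      refine ⟨k, hk, hσk, ?_⟩
      rw [haa]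
      simp only
      rw [hσk, if_pos (hcc0 l hPl)]
      norm_num
  -- determinant positivity
  have hdp := DP hI hγ hUD hdet yy hyy_lt hyyI σF hσFmono aa key2 key3
  -- linear dependence of rows
  have hsum : ∑ l : Fin d, cc l •
      (∑ k ∈ (Finset.range n).filter (fun k => σF k = l), aa k • w k) = 0 := by
    have e1 : ∀ l : Fin d, cc l • (∑ k ∈ (Finset.range n).filter (fun k => σF k = l), aa k • w k)
        = ∑ k ∈ (Finset.range n).filter (fun k => σF k = l), b k • w k := by
      intro l
      rw [Finset.smul_sum]
      apply Finset.sum_congr rfl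
      intro k hk
      simp only [Finset.mem_filter, Finset.mem_range] at hk
      rw [smul_smul, ← hk.2, key1 k hk.1]
    rw [Finset.sum_congr rfl (fun l _ => e1 l)]
    rw [Finset.sum_fiberwise_of_maps_to (fun k _ => Finset.mem_univ (σF k))]
    exact hmain
  have hdet0 : (Matrix.of fun l : Fin d => ∑ k ∈ (Finset.range n).filter (fun k => σF k = l),
      aa k • w k).det = 0 := by
    apply Matrix.exists_vecMul_eq_zero_iff.mp
    refine ⟨cc, ?_, ?_⟩
    · intro hzero
      have hPk0 : P (σF k0) := ⟨k0, hk0n, rfl, hbk0⟩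
      exact hccne _ hPk0 (congrFun hzero (σF k0))
    · funext j
      have := congrFun hsum j
      simp only [Finset.sum_apply, Pi.smul_apply, smul_eq_mul, Pi.zero_apply] at this
      simp only [Matrix.vecMul, dotProduct, Matrix.of_apply, Pi.zero_apply,
        Finset.sum_apply, Pi.smul_apply, smul_eq_mul]
      exact this
  rw [hw] at hdet0
  linarith [hdp, hdet0]
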